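/- The rotation group SO(3) is homeomorphic to real projective 3-space ℝP³, the quotient of the sphere S³ obtained by identifying antipodal points (equivalently, the projectivization of ℝ⁴). -/

import Mathlib

open Matrix

/-- Real projective 3-space carries the quotient topology coming from
`ℝ⁴ \ {0}` (with its subspace topology) under the identification of vectors
that differ by nonzero scalar multiplication. -/
instance : TopologicalSpace (Projectivization ℝ (Fin 4 → ℝ)) :=
  inferInstanceAs (TopologicalSpace (Quotient (projectivizationSetoid ℝ (Fin 4 → ℝ))))

noncomputable section SO3RP3Aux

def qn4 (v : Fin 4 → ℝ) : ℝ := v 0 ^ 2 + v 1 ^ 2 + v 2 ^ 2 + v 3 ^ 2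

def qm4 (v : Fin 4 → ℝ) : Matrix (Fin 3) (Fin 3) ℝ :=
  !![v 0 ^ 2 + v 1 ^ 2 - v 2 ^ 2 - v 3 ^ 2, 2 * (v 1 * v 2 - v 0 * v 3), 2 * (v 1 * v 3 + v 0 * v 2);
     2 * (v 1 * v 2 + v 0 * v 3), v 0 ^ 2 - v 1 ^ 2 + v 2 ^ 2 - v 3 ^ 2, 2 * (v 2 * v 3 - v 0 * v 1);
     2 * (v 1 * v 3 - v 0 * v 2), 2 * (v 2 * v 3 + v 0 * v 1), v 0 ^ 2 - v 1 ^ 2 - v 2 ^ 2 + v 3 ^ 2]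

def rot4 (v : Fin 4 → ℝ) : Matrix (Fin 3) (Fin 3) ℝ := (qn4 v)⁻¹ • qm4 v

lemma qn4_pos {v : Fin 4 → ℝ} (hv : v ≠ 0) : 0 < qn4 v := by
  by_contra hle
  push_neg at hle
  unfold qn4 at hle
  have sq : ∀ i : Fin 4, (0:ℝ) ≤ v i ^ 2 := fun i => sq_nonneg _
  have h0 : v 0 = 0 := sq_eq_zero_iff.mp (le_antisymm (by nlinarith [sq 0, sq 1, sq 2, sq 3]) (sq_nonneg _))
  have h1 : v 1 = 0 := sq_eq_zero_iff.mp (le_antisymm (by nlinarith [sq 0, sq 1, sq 2, sq 3]) (sq_nonneg _))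
  have h2 : v 2 = 0 := sq_eq_zero_iff.mp (le_antisymm (by nlinarith [sq 0, sq 1, sq 2, sq 3]) (sq_nonneg _))
  have h3 : v 3 = 0 := sq_eq_zero_iff.mp (le_antisymm (by nlinarith [sq 0, sq 1, sq 2, sq 3]) (sq_nonneg _))
  apply hv
  funext j
  fin_cases j <;> simpa using ‹_›

lemma qm4_mul_transpose (v : Fin 4 → ℝ) : qm4 v * (qm4 v)ᵀ = (qn4 v ^ 2) • 1 := by
  ext i j
  rw [Matrix.mul_apply]
  simp only [Matrix.transpose_apply, Fin.sum_univ_three]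
  fin_cases i <;> fin_cases j <;>
    · simp [qm4, qn4, Matrix.one_apply, Matrix.smul_apply]
      ring

lemma qm4_det (v : Fin 4 → ℝ) : (qm4 v).det = qn4 v ^ 3 := by
  rw [Matrix.det_fin_three]
  simp [qm4, qn4]
  ring

lemma rot4_mem {v : Fin 4 → ℝ} (hv : v ≠ 0) :
    rot4 v ∈ Matrix.specialOrthogonalGroup (Fin 3) ℝ := by
  have hn : qn4 v ≠ 0 := (qn4_pos hv).ne'
  rw [Matrix.mem_specialOrthogonalGroup_iff]
  constructor
  · rw [Matrix.mem_orthogonalGroup_iff,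
      rot4, Matrix.transpose_smul,
      Matrix.smul_mul, Matrix.mul_smul, smul_smul, qm4_mul_transpose, smul_smul]
    rw [show (qn4 v)⁻¹ * (qn4 v)⁻¹ * qn4 v ^ 2 = 1 by field_simp, one_smul]
  · rw [rot4, Matrix.det_smul, qm4_det, Fintype.card_fin]
    field_simp


lemma qn4_smul (t : ℝ) (v : Fin 4 → ℝ) : qn4 (t • v) = t ^ 2 * qn4 v := by
  simp [qn4, Pi.smul_apply, smul_eq_mul]; ring

lemma qm4_smul (t : ℝ) (v : Fin 4 → ℝ) : qm4 (t • v) = t ^ 2 • qm4 v := by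
  ext i j
  fin_cases i <;> fin_cases j <;>
    · simp [qm4, Matrix.smul_apply, Pi.smul_apply, smul_eq_mul]
      ring

lemma rot4_smul {t : ℝ} (v : Fin 4 → ℝ) (hv : v ≠ 0) (ht : t ≠ 0) :
    rot4 (t • v) = rot4 v := by
  have hn : qn4 v ≠ 0 := (qn4_pos hv).ne'
  rw [rot4, rot4, qn4_smul, qm4_smul, smul_smul,
    show (t ^ 2 * qn4 v)⁻¹ * t ^ 2 = (qn4 v)⁻¹ by field_simp]

/-- the map on nonzero vectors -/
def rotMap (v : { v : Fin 4 → ℝ // v ≠ 0 }) : Matrix.specialOrthogonalGroup (Fin 3) ℝ :=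
  ⟨rot4 v.1, rot4_mem v.2⟩

lemma rotMap_invariant : ∀ (a b : { v : Fin 4 → ℝ // v ≠ 0 }) (t : ℝ),
    (a : Fin 4 → ℝ) = t • (b : Fin 4 → ℝ) → rotMap a = rotMap b := by
  rintro ⟨v, hv⟩ ⟨w, hw⟩ t h
  have ht : t ≠ 0 := by
    rintro rfl
    simp only at h
    rw [zero_smul] at h
    exact hv h
  apply Subtype.ext
  simp only [rotMap]
  rw [show v = t • w from h]
  exact rot4_smul w hw ht

/-- the induced map on projective space -/
def so3OfP : Projectivization ℝ (Fin 4 → ℝ) → Matrix.specialOrthogonalGroup (Fin 3) ℝ :=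
  Projectivization.lift rotMap rotMap_invariant

lemma continuous_qn4 : Continuous qn4 := by
  unfold qn4
  continuity

lemma continuous_qm4 : Continuous qm4 := by
  apply continuous_matrix
  intro i j
  fin_cases i <;> fin_cases j <;>
    · simp only [qm4, Matrix.of_apply, Matrix.cons_val', Matrix.cons_val_zero, Matrix.cons_val_one,
        Matrix.head_cons, Matrix.empty_val', Matrix.cons_val_fin_one, Matrix.head_fin_const,
        Fin.zero_eta, Fin.mk_one, Matrix.cons_val_two, Matrix.tail_cons]
      continuity

lemma continuous_so3OfP : Continuous so3OfP := by
  apply Continuous.quotient_lift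
  apply Continuous.subtype_mk
  have h1 : Continuous fun v : { v : Fin 4 → ℝ // v ≠ 0 } => (qn4 v.1)⁻¹ :=
    (continuous_qn4.comp continuous_subtype_val).inv₀ fun x => (qn4_pos x.2).ne'
  exact h1.smul (continuous_qm4.comp continuous_subtype_val)
set_option maxHeartbeats 1000000 in
lemma so3OfP_injective : Function.Injective so3OfP := by
  intro pq q h
  induction pq using Projectivization.ind with | h v hv => ?_
  induction q using Projectivization.ind with | h w hw => ?_
  rw [so3OfP, Projectivization.lift_mk, Projectivization.lift_mk] at h
  have hm : rot4 v = rot4 w := congrArg Subtype.val h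
  have hnv : (0:ℝ) < (v 0^2 + v 1^2 + v 2^2 + v 3^2) := by have := qn4_pos hv; rwa [qn4] at this
  have hnw : (0:ℝ) < (w 0^2 + w 1^2 + w 2^2 + w 3^2) := by have := qn4_pos hw; rwa [qn4] at this
  have E00 : (v 0^2 + v 1^2 - v 2^2 - v 3^2) * (w 0^2 + w 1^2 + w 2^2 + w 3^2) = (w 0^2 + w 1^2 - w 2^2 - w 3^2) * (v 0^2 + v 1^2 + v 2^2 + v 3^2) := by
    have e := congrFun (congrFun hm 0) 0
    simp only [rot4, qm4, qn4, Matrix.smul_apply, smul_eq_mul, Matrix.of_apply,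
      Matrix.cons_val', Matrix.cons_val_zero, Matrix.cons_val_one, Matrix.head_cons,
      Matrix.empty_val', Matrix.cons_val_fin_one, Matrix.head_fin_const,
      Matrix.cons_val_two, Matrix.tail_cons] at e
    field_simp at e
    linear_combination e
  have E01 : (2*(v 1 * v 2 - v 0 * v 3)) * (w 0^2 + w 1^2 + w 2^2 + w 3^2) = (2*(w 1 * w 2 - w 0 * w 3)) * (v 0^2 + v 1^2 + v 2^2 + v 3^2) := by
    have e := congrFun (congrFun hm 0) 1
    simp only [rot4, qm4, qn4, Matrix.smul_apply, smul_eq_mul, Matrix.of_apply,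
      Matrix.cons_val', Matrix.cons_val_zero, Matrix.cons_val_one, Matrix.head_cons,
      Matrix.empty_val', Matrix.cons_val_fin_one, Matrix.head_fin_const,
      Matrix.cons_val_two, Matrix.tail_cons] at e
    field_simp at e
    linear_combination 2 * e
  have E02 : (2*(v 1 * v 3 + v 0 * v 2)) * (w 0^2 + w 1^2 + w 2^2 + w 3^2) = (2*(w 1 * w 3 + w 0 * w 2)) * (v 0^2 + v 1^2 + v 2^2 + v 3^2) := by
    have e := congrFun (congrFun hm 0) 2
    simp only [rot4, qm4, qn4, Matrix.smul_apply, smul_eq_mul, Matrix.of_apply,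
      Matrix.cons_val', Matrix.cons_val_zero, Matrix.cons_val_one, Matrix.head_cons,
      Matrix.empty_val', Matrix.cons_val_fin_one, Matrix.head_fin_const,
      Matrix.cons_val_two, Matrix.tail_cons] at e
    field_simp at e
    linear_combination 2 * e
  have E10 : (2*(v 1 * v 2 + v 0 * v 3)) * (w 0^2 + w 1^2 + w 2^2 + w 3^2) = (2*(w 1 * w 2 + w 0 * w 3)) * (v 0^2 + v 1^2 + v 2^2 + v 3^2) := by
    have e := congrFun (congrFun hm 1) 0
    simp only [rot4, qm4, qn4, Matrix.smul_apply, smul_eq_mul, Matrix.of_apply,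
      Matrix.cons_val', Matrix.cons_val_zero, Matrix.cons_val_one, Matrix.head_cons,
      Matrix.empty_val', Matrix.cons_val_fin_one, Matrix.head_fin_const,
      Matrix.cons_val_two, Matrix.tail_cons] at e
    field_simp at e
    linear_combination 2 * e
  have E11 : (v 0^2 - v 1^2 + v 2^2 - v 3^2) * (w 0^2 + w 1^2 + w 2^2 + w 3^2) = (w 0^2 - w 1^2 + w 2^2 - w 3^2) * (v 0^2 + v 1^2 + v 2^2 + v 3^2) := by
    have e := congrFun (congrFun hm 1) 1
    simp only [rot4, qm4, qn4, Matrix.smul_apply, smul_eq_mul, Matrix.of_apply,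
      Matrix.cons_val', Matrix.cons_val_zero, Matrix.cons_val_one, Matrix.head_cons,
      Matrix.empty_val', Matrix.cons_val_fin_one, Matrix.head_fin_const,
      Matrix.cons_val_two, Matrix.tail_cons] at e
    field_simp at e
    linear_combination e
  have E12 : (2*(v 2 * v 3 - v 0 * v 1)) * (w 0^2 + w 1^2 + w 2^2 + w 3^2) = (2*(w 2 * w 3 - w 0 * w 1)) * (v 0^2 + v 1^2 + v 2^2 + v 3^2) := by
    have e := congrFun (congrFun hm 1) 2
    simp only [rot4, qm4, qn4, Matrix.smul_apply, smul_eq_mul, Matrix.of_apply,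
      Matrix.cons_val', Matrix.cons_val_zero, Matrix.cons_val_one, Matrix.head_cons,
      Matrix.empty_val', Matrix.cons_val_fin_one, Matrix.head_fin_const,
      Matrix.cons_val_two, Matrix.tail_cons] at e
    field_simp at e
    linear_combination 2 * e
  have E20 : (2*(v 1 * v 3 - v 0 * v 2)) * (w 0^2 + w 1^2 + w 2^2 + w 3^2) = (2*(w 1 * w 3 - w 0 * w 2)) * (v 0^2 + v 1^2 + v 2^2 + v 3^2) := by
    have e := congrFun (congrFun hm 2) 0
    simp only [rot4, qm4, qn4, Matrix.smul_apply, smul_eq_mul, Matrix.of_apply,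
      Matrix.cons_val', Matrix.cons_val_zero, Matrix.cons_val_one, Matrix.head_cons,
      Matrix.empty_val', Matrix.cons_val_fin_one, Matrix.head_fin_const,
      Matrix.cons_val_two, Matrix.tail_cons] at e
    field_simp at e
    linear_combination 2 * e
  have E21 : (2*(v 2 * v 3 + v 0 * v 1)) * (w 0^2 + w 1^2 + w 2^2 + w 3^2) = (2*(w 2 * w 3 + w 0 * w 1)) * (v 0^2 + v 1^2 + v 2^2 + v 3^2) := by
    have e := congrFun (congrFun hm 2) 1
    simp only [rot4, qm4, qn4, Matrix.smul_apply, smul_eq_mul, Matrix.of_apply,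
      Matrix.cons_val', Matrix.cons_val_zero, Matrix.cons_val_one, Matrix.head_cons,
      Matrix.empty_val', Matrix.cons_val_fin_one, Matrix.head_fin_const,
      Matrix.cons_val_two, Matrix.tail_cons] at e
    field_simp at e
    linear_combination 2 * e
  have E22 : (v 0^2 - v 1^2 - v 2^2 + v 3^2) * (w 0^2 + w 1^2 + w 2^2 + w 3^2) = (w 0^2 - w 1^2 - w 2^2 + w 3^2) * (v 0^2 + v 1^2 + v 2^2 + v 3^2) := by
    have e := congrFun (congrFun hm 2) 2
    simp only [rot4, qm4, qn4, Matrix.smul_apply, smul_eq_mul, Matrix.of_apply,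
      Matrix.cons_val', Matrix.cons_val_zero, Matrix.cons_val_one, Matrix.head_cons,
      Matrix.empty_val', Matrix.cons_val_fin_one, Matrix.head_fin_const,
      Matrix.cons_val_two, Matrix.tail_cons] at e
    field_simp at e
    linear_combination e
  have hP : ∀ i j : Fin 4, v i * v j * (w 0^2 + w 1^2 + w 2^2 + w 3^2) = w i * w j * (v 0^2 + v 1^2 + v 2^2 + v 3^2) := by
    intro i j
    fin_cases i <;> fin_cases j <;>
      simp only [show ((⟨0, by omega⟩ : Fin 4)) = 0 from rfl, show ((⟨1, by omega⟩ : Fin 4)) = 1 from rfl,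
        show ((⟨2, by omega⟩ : Fin 4)) = 2 from rfl, show ((⟨3, by omega⟩ : Fin 4)) = 3 from rfl]
    · linear_combination (E00 + E11 + E22)/4
    · linear_combination (E21 - E12)/4
    · linear_combination (E02 - E20)/4
    · linear_combination (E10 - E01)/4
    · linear_combination (E21 - E12)/4
    · linear_combination (E00 - E11 - E22)/4
    · linear_combination (E10 + E01)/4
    · linear_combination (E02 + E20)/4
    · linear_combination (E02 - E20)/4
    · linear_combination (E10 + E01)/4
    · linear_combination (-E00 + E11 - E22)/4
    · linear_combination (E21 + E12)/4
    · linear_combination (E10 - E01)/4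
    · linear_combination (E02 + E20)/4
    · linear_combination (E21 + E12)/4
    · linear_combination (-E00 - E11 + E22)/4
  obtain ⟨i0, hvi⟩ := Function.ne_iff.mp hv
  simp only [Pi.zero_apply] at hvi
  have hwi : w i0 ≠ 0 := by
    intro h0
    have h1 := hP i0 i0
    rw [h0] at h1
    have h2 : (0:ℝ) < v i0 * v i0 * (w 0^2 + w 1^2 + w 2^2 + w 3^2) := mul_pos (mul_self_pos.mpr hvi) hnw
    have h3 : v i0 * v i0 * (w 0^2 + w 1^2 + w 2^2 + w 3^2) = 0 := by linear_combination h1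
    exact h2.ne' h3
  rw [Projectivization.mk_eq_mk_iff']
  refine ⟨w i0 * (v 0^2 + v 1^2 + v 2^2 + v 3^2) / (v i0 * (w 0^2 + w 1^2 + w 2^2 + w 3^2)), funext fun j => ?_⟩
  have hj := hP i0 j
  simp only [Pi.smul_apply, smul_eq_mul]
  field_simp
  first
  | linear_combination hj
  | linear_combination -hj
  | linear_combination (v i0 * (w 0^2 + w 1^2 + w 2^2 + w 3^2)) * hj
set_option maxHeartbeats 1000000 in
lemma soKey0 (r00 r01 r02 r10 r11 r12 r20 r21 r22 : ℝ)
    (hA00 : r00*r00 + r01*r01 + r02*r02 = 1)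
    (hB00 : r00*r00 + r10*r10 + r20*r20 = 1)
    (hA01 : r00*r10 + r01*r11 + r02*r12 = 0)
    (hB01 : r00*r01 + r10*r11 + r20*r21 = 0)
    (hA02 : r00*r20 + r01*r21 + r02*r22 = 0)
    (hB02 : r00*r02 + r10*r12 + r20*r22 = 0)
    (hA11 : r10*r10 + r11*r11 + r12*r12 = 1)
    (hB11 : r01*r01 + r11*r11 + r21*r21 = 1)
    (hA12 : r10*r20 + r11*r21 + r12*r22 = 0)
    (hB12 : r01*r02 + r11*r12 + r21*r22 = 0)
    (hA22 : r20*r20 + r21*r21 + r22*r22 = 1)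
    (hB22 : r02*r02 + r12*r12 + r22*r22 = 1)
    (hC00 : r00 = r11*r22 - r12*r21)
    (hC01 : r01 = -(r10*r22 - r12*r20))
    (hC02 : r02 = r10*r21 - r11*r20)
    (hC10 : r10 = -(r01*r22 - r02*r21))
    (hC11 : r11 = r00*r22 - r02*r20)
    (hC12 : r12 = -(r00*r21 - r01*r20))
    (hC20 : r20 = r01*r12 - r02*r11)
    (hC21 : r21 = -(r00*r12 - r02*r10))
    (hC22 : r22 = r00*r11 - r01*r10)
    (hD : r00*(r11*r22 - r12*r21) - r01*(r10*r22 - r12*r20) + r02*(r10*r21 - r11*r20) = 1)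
    : qm4 ![(1 + r00 + r11 + r22), (r21 - r12), (r02 - r20), (r10 - r01)] = ((1 + r00 + r11 + r22)^2 + (r21 - r12)^2 + (r02 - r20)^2 + (r10 - r01)^2) • !![r00, r01, r02; r10, r11, r12; r20, r21, r22] := by
  ext i j
  fin_cases i <;> fin_cases j <;>
    simp [qm4, qn4, Matrix.smul_apply, smul_eq_mul,
      show ((⟨0, by omega⟩ : Fin 3)) = 0 from rfl, show ((⟨1, by omega⟩ : Fin 3)) = 1 from rfl,
      show ((⟨2, by omega⟩ : Fin 3)) = 2 from rfl]
  · linear_combination ((-1)*r00 - (2)*r11 - (2)*r22 - (3)) * hA00 + (2*r01 - (1)*r10) * hA01 + (2*r02 - (1)*r20) * hA02 + ((-1)) * hA11 + ((-1)) * hA22 + (2*r22 + 2) * hB11 + ((-2)*r12 - (2)*r21) * hB12 + (2*r11 + 2) * hB22 + (2*r00 + 2*r11 + 2*r22) * hC00 + (r22 + 2) * hC11 + ((-1)*r21) * hC12 + ((-1)*r12) * hC21 + (r11 + 2) * hC22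
  · linear_combination ((-1)*r01) * hA00 + ((-2)) * hA01 + ((-1)*r01) * hA11 + ((-1)*r01) * hA22 + ((-2)*r11 - (2)*r22 - (2)) * hB01 + (2*r10) * hB11 + (2*r20) * hB12 + (2*r01) * hC00 + (2*r11 - (2)) * hC01 + (2*r21) * hC02
  · linear_combination ((-1)*r02) * hA00 + ((-2)) * hA02 + ((-1)*r02) * hA11 + ((-1)*r02) * hA22 + ((-2)*r11 - (2)*r22 - (2)) * hB02 + (2*r10) * hB12 + (2*r20) * hB22 + (2*r02) * hC00 + (2*r12) * hC01 + (2*r22 - (2)) * hC02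
  · linear_combination ((-1)*r10) * hA00 + ((-2)*r11 - (2)*r22 - (2)) * hA01 + (2*r01 - (1)*r10) * hA11 + (2*r02 - (1)*r20) * hA12 + ((-2)) * hB01 + (2*r10) * hC00 + ((-1)*r22) * hC01 + (r21) * hC02 + (2*r11 - (1)) * hC10 + (2*r12) * hC20
  · linear_combination ((-1)*r11 + 1) * hA00 + ((-1)*r11 + 1) * hA11 + ((-1)*r11 + 1) * hA22 + ((-2)) * hB11 + ((-2)) * hB22 + (2*r11 + 2) * hC00 + (2*r02) * hC02 + ((-2)*r10) * hC10 + ((-2)) * hC11 + (2*r11 + 2*r22 + 2) * hC22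
  · linear_combination ((-1)*r12) * hA00 + ((-1)*r12) * hA11 + ((-2)) * hA12 + ((-1)*r12) * hA22 + (2*r12) * hC00 + ((-2)*r02) * hC01 + ((-2)) * hC12 + ((-2)*r22 - (2)) * hC21 + (2*r12) * hC22
  · linear_combination ((-1)*r20) * hA00 + ((-2)*r11 - (2)*r22 - (2)) * hA02 + ((-1)*r20) * hA11 + (2*r01) * hA12 + (2*r02 - (1)*r20) * hA22 + ((-2)) * hB02 + (2*r20) * hC00 + (2*r21) * hC10 + (2*r22 - (2)) * hC20
  · linear_combination ((-1)*r21) * hA00 + ((-1)*r21) * hA11 + ((-1)*r21) * hA22 + ((-2)) * hB12 + (2*r21) * hC00 + ((-2)*r20) * hC10 + ((-2)*r22 - (2)) * hC12 + ((-2)) * hC21 + (2*r21) * hC22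
  · linear_combination ((-1)*r22 + 1) * hA00 + ((-1)*r22 + 1) * hA11 + ((-1)*r22 - (1)) * hA22 + ((-2)) * hB22 + (2*r22 + 2) * hC00 + (2*r22 + 2) * hC11 + (2*r22 - (2)) * hC22

set_option maxHeartbeats 1000000 in
lemma soKey1 (r00 r01 r02 r10 r11 r12 r20 r21 r22 : ℝ)
    (hA00 : r00*r00 + r01*r01 + r02*r02 = 1)
    (hB00 : r00*r00 + r10*r10 + r20*r20 = 1)
    (hA01 : r00*r10 + r01*r11 + r02*r12 = 0)
    (hB01 : r00*r01 + r10*r11 + r20*r21 = 0)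
    (hA02 : r00*r20 + r01*r21 + r02*r22 = 0)
    (hB02 : r00*r02 + r10*r12 + r20*r22 = 0)
    (hA11 : r10*r10 + r11*r11 + r12*r12 = 1)
    (hB11 : r01*r01 + r11*r11 + r21*r21 = 1)
    (hA12 : r10*r20 + r11*r21 + r12*r22 = 0)
    (hB12 : r01*r02 + r11*r12 + r21*r22 = 0)
    (hA22 : r20*r20 + r21*r21 + r22*r22 = 1)
    (hB22 : r02*r02 + r12*r12 + r22*r22 = 1)
    (hC00 : r00 = r11*r22 - r12*r21)
    (hC01 : r01 = -(r10*r22 - r12*r20))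
    (hC02 : r02 = r10*r21 - r11*r20)
    (hC10 : r10 = -(r01*r22 - r02*r21))
    (hC11 : r11 = r00*r22 - r02*r20)
    (hC12 : r12 = -(r00*r21 - r01*r20))
    (hC20 : r20 = r01*r12 - r02*r11)
    (hC21 : r21 = -(r00*r12 - r02*r10))
    (hC22 : r22 = r00*r11 - r01*r10)
    (hD : r00*(r11*r22 - r12*r21) - r01*(r10*r22 - r12*r20) + r02*(r10*r21 - r11*r20) = 1)
    : qm4 ![(r21 - r12), (1 + r00 - r11 - r22), (r10 + r01), (r02 + r20)] = ((r21 - r12)^2 + (1 + r00 - r11 - r22)^2 + (r10 + r01)^2 + (r02 + r20)^2) • !![r00, r01, r02; r10, r11, r12; r20, r21, r22] := by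
  ext i j
  fin_cases i <;> fin_cases j <;>
    simp [qm4, qn4, Matrix.smul_apply, smul_eq_mul,
      show ((⟨0, by omega⟩ : Fin 3)) = 0 from rfl, show ((⟨1, by omega⟩ : Fin 3)) = 1 from rfl,
      show ((⟨2, by omega⟩ : Fin 3)) = 2 from rfl]
  · linear_combination ((-1)*r00 + 2*r11 + 2*r22 - (3)) * hA00 + ((-2)*r01 - (1)*r10) * hA01 + ((-2)*r02 - (1)*r20) * hA02 + ((-1)) * hA11 + ((-1)) * hA22 + ((-2)*r22 + 2) * hB11 + (2*r12 + 2*r21) * hB12 + ((-2)*r11 + 2) * hB22 + (2*r00 - (2)*r11 - (2)*r22) * hC00 + (r22 - (2)) * hC11 + ((-1)*r21) * hC12 + ((-1)*r12) * hC21 + (r11 - (2)) * hC22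
  · linear_combination ((-1)*r01) * hA00 + (2) * hA01 + ((-1)*r01) * hA11 + ((-1)*r01) * hA22 + (2*r11 + 2*r22 - (2)) * hB01 + ((-2)*r10) * hB11 + ((-2)*r20) * hB12 + (2*r01) * hC00 + ((-2)*r11 - (2)) * hC01 + ((-2)*r21) * hC02
  · linear_combination ((-1)*r02) * hA00 + (2) * hA02 + ((-1)*r02) * hA11 + ((-1)*r02) * hA22 + (2*r11 + 2*r22 - (2)) * hB02 + ((-2)*r10) * hB12 + ((-2)*r20) * hB22 + (2*r02) * hC00 + ((-2)*r12) * hC01 + ((-2)*r22 - (2)) * hC02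
  · linear_combination ((-1)*r10) * hA00 + (2*r11 + 2*r22 - (2)) * hA01 + ((-2)*r01 - (1)*r10) * hA11 + ((-2)*r02 - (1)*r20) * hA12 + (2) * hB01 + (2*r10) * hC00 + ((-1)*r22) * hC01 + (r21) * hC02 + ((-2)*r11 - (1)) * hC10 + ((-2)*r12) * hC20
  · linear_combination ((-1)*r11 - (1)) * hA00 + ((-1)*r11 - (1)) * hA11 + ((-1)*r11 - (1)) * hA22 + (2) * hB11 + (2) * hB22 + (2*r11 - (2)) * hC00 + ((-2)*r02) * hC02 + (2*r10) * hC10 + ((-2)) * hC11 + ((-2)*r11 - (2)*r22 + 2) * hC22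
  · linear_combination ((-1)*r12) * hA00 + ((-1)*r12) * hA11 + (2) * hA12 + ((-1)*r12) * hA22 + (2*r12) * hC00 + (2*r02) * hC01 + ((-2)) * hC12 + (2*r22 - (2)) * hC21 + ((-2)*r12) * hC22
  · linear_combination ((-1)*r20) * hA00 + (2*r11 + 2*r22 - (2)) * hA02 + ((-1)*r20) * hA11 + ((-2)*r01) * hA12 + ((-2)*r02 - (1)*r20) * hA22 + (2) * hB02 + (2*r20) * hC00 + ((-2)*r21) * hC10 + ((-2)*r22 - (2)) * hC20
  · linear_combination ((-1)*r21) * hA00 + ((-1)*r21) * hA11 + ((-1)*r21) * hA22 + (2) * hB12 + (2*r21) * hC00 + (2*r20) * hC10 + (2*r22 - (2)) * hC12 + ((-2)) * hC21 + ((-2)*r21) * hC22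
  · linear_combination ((-1)*r22 - (1)) * hA00 + ((-1)*r22 - (1)) * hA11 + ((-1)*r22 + 1) * hA22 + (2) * hB22 + (2*r22 - (2)) * hC00 + ((-2)*r22 + 2) * hC11 + ((-2)*r22 - (2)) * hC22

set_option maxHeartbeats 1000000 in
lemma soKey2 (r00 r01 r02 r10 r11 r12 r20 r21 r22 : ℝ)
    (hA00 : r00*r00 + r01*r01 + r02*r02 = 1)
    (hB00 : r00*r00 + r10*r10 + r20*r20 = 1)
    (hA01 : r00*r10 + r01*r11 + r02*r12 = 0)
    (hB01 : r00*r01 + r10*r11 + r20*r21 = 0)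
    (hA02 : r00*r20 + r01*r21 + r02*r22 = 0)
    (hB02 : r00*r02 + r10*r12 + r20*r22 = 0)
    (hA11 : r10*r10 + r11*r11 + r12*r12 = 1)
    (hB11 : r01*r01 + r11*r11 + r21*r21 = 1)
    (hA12 : r10*r20 + r11*r21 + r12*r22 = 0)
    (hB12 : r01*r02 + r11*r12 + r21*r22 = 0)
    (hA22 : r20*r20 + r21*r21 + r22*r22 = 1)
    (hB22 : r02*r02 + r12*r12 + r22*r22 = 1)
    (hC00 : r00 = r11*r22 - r12*r21)
    (hC01 : r01 = -(r10*r22 - r12*r20))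
    (hC02 : r02 = r10*r21 - r11*r20)
    (hC10 : r10 = -(r01*r22 - r02*r21))
    (hC11 : r11 = r00*r22 - r02*r20)
    (hC12 : r12 = -(r00*r21 - r01*r20))
    (hC20 : r20 = r01*r12 - r02*r11)
    (hC21 : r21 = -(r00*r12 - r02*r10))
    (hC22 : r22 = r00*r11 - r01*r10)
    (hD : r00*(r11*r22 - r12*r21) - r01*(r10*r22 - r12*r20) + r02*(r10*r21 - r11*r20) = 1)
    : qm4 ![(r02 - r20), (r10 + r01), (1 - r00 + r11 - r22), (r21 + r12)] = ((r02 - r20)^2 + (r10 + r01)^2 + (1 - r00 + r11 - r22)^2 + (r21 + r12)^2) • !![r00, r01, r02; r10, r11, r12; r20, r21, r22] := by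
  ext i j
  fin_cases i <;> fin_cases j <;>
    simp [qm4, qn4, Matrix.smul_apply, smul_eq_mul,
      show ((⟨0, by omega⟩ : Fin 3)) = 0 from rfl, show ((⟨1, by omega⟩ : Fin 3)) = 1 from rfl,
      show ((⟨2, by omega⟩ : Fin 3)) = 2 from rfl]
  · linear_combination ((-1)*r00 + 2*r11 - (2)*r22 + 3) * hA00 + ((-2)*r01 - (1)*r10) * hA01 + (2*r02 - (1)*r20) * hA02 + (1) * hA11 + (1) * hA22 + (2*r22 - (2)) * hB11 + (2*r12 - (2)*r21) * hB12 + ((-2)*r11 - (2)) * hB22 + ((-2)*r00 + 2*r11 - (2)*r22) * hC00 + (r22 - (2)) * hC11 + ((-1)*r21) * hC12 + ((-1)*r12) * hC21 + (r11 + 2) * hC22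
  · linear_combination ((-1)*r01) * hA00 + ((-2)) * hA01 + ((-1)*r01) * hA11 + ((-1)*r01) * hA22 + (2*r11 - (2)*r22 + 2) * hB01 + ((-2)*r10) * hB11 + (2*r20) * hB12 + ((-2)*r01) * hC00 + (2*r11 - (2)) * hC01 + ((-2)*r21) * hC02
  · linear_combination ((-1)*r02) * hA00 + (2) * hA02 + ((-1)*r02) * hA11 + ((-1)*r02) * hA22 + (2*r11 - (2)*r22 + 2) * hB02 + ((-2)*r10) * hB12 + (2*r20) * hB22 + ((-2)*r02) * hC00 + (2*r12) * hC01 + ((-2)*r22 - (2)) * hC02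
  · linear_combination ((-1)*r10) * hA00 + (2*r11 - (2)*r22 + 2) * hA01 + ((-2)*r01 - (1)*r10) * hA11 + (2*r02 - (1)*r20) * hA12 + ((-2)) * hB01 + ((-2)*r10) * hC00 + ((-1)*r22) * hC01 + (r21) * hC02 + (2*r11 - (1)) * hC10 + ((-2)*r12) * hC20
  · linear_combination ((-1)*r11 + 1) * hA00 + ((-1)*r11 + 1) * hA11 + ((-1)*r11 + 1) * hA22 + ((-2)) * hB11 + ((-2)) * hB22 + ((-2)*r11 - (2)) * hC00 + (2*r02) * hC02 + ((-2)*r10) * hC10 + ((-2)) * hC11 + ((-2)*r11 + 2*r22 - (2)) * hC22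
  · linear_combination ((-1)*r12) * hA00 + ((-1)*r12) * hA11 + (2) * hA12 + ((-1)*r12) * hA22 + ((-2)*r12) * hC00 + ((-2)*r02) * hC01 + ((-2)) * hC12 + ((-2)*r22 + 2) * hC21 + ((-2)*r12) * hC22
  · linear_combination ((-1)*r20) * hA00 + (2*r11 - (2)*r22 + 2) * hA02 + ((-1)*r20) * hA11 + ((-2)*r01) * hA12 + (2*r02 - (1)*r20) * hA22 + (2) * hB02 + ((-2)*r20) * hC00 + (2*r21) * hC10 + ((-2)*r22 - (2)) * hC20
  · linear_combination ((-1)*r21) * hA00 + ((-1)*r21) * hA11 + ((-1)*r21) * hA22 + (2) * hB12 + ((-2)*r21) * hC00 + ((-2)*r20) * hC10 + ((-2)*r22 + 2) * hC12 + ((-2)) * hC21 + ((-2)*r21) * hC22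
  · linear_combination ((-1)*r22 - (1)) * hA00 + ((-1)*r22 - (1)) * hA11 + ((-1)*r22 + 1) * hA22 + (2) * hB22 + ((-2)*r22 + 2) * hC00 + (2*r22 - (2)) * hC11 + ((-2)*r22 - (2)) * hC22

set_option maxHeartbeats 1000000 in
lemma soKey3 (r00 r01 r02 r10 r11 r12 r20 r21 r22 : ℝ)
    (hA00 : r00*r00 + r01*r01 + r02*r02 = 1)
    (hB00 : r00*r00 + r10*r10 + r20*r20 = 1)
    (hA01 : r00*r10 + r01*r11 + r02*r12 = 0)
    (hB01 : r00*r01 + r10*r11 + r20*r21 = 0)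
    (hA02 : r00*r20 + r01*r21 + r02*r22 = 0)
    (hB02 : r00*r02 + r10*r12 + r20*r22 = 0)
    (hA11 : r10*r10 + r11*r11 + r12*r12 = 1)
    (hB11 : r01*r01 + r11*r11 + r21*r21 = 1)
    (hA12 : r10*r20 + r11*r21 + r12*r22 = 0)
    (hB12 : r01*r02 + r11*r12 + r21*r22 = 0)
    (hA22 : r20*r20 + r21*r21 + r22*r22 = 1)
    (hB22 : r02*r02 + r12*r12 + r22*r22 = 1)
    (hC00 : r00 = r11*r22 - r12*r21)
    (hC01 : r01 = -(r10*r22 - r12*r20))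
    (hC02 : r02 = r10*r21 - r11*r20)
    (hC10 : r10 = -(r01*r22 - r02*r21))
    (hC11 : r11 = r00*r22 - r02*r20)
    (hC12 : r12 = -(r00*r21 - r01*r20))
    (hC20 : r20 = r01*r12 - r02*r11)
    (hC21 : r21 = -(r00*r12 - r02*r10))
    (hC22 : r22 = r00*r11 - r01*r10)
    (hD : r00*(r11*r22 - r12*r21) - r01*(r10*r22 - r12*r20) + r02*(r10*r21 - r11*r20) = 1)
    : qm4 ![(r10 - r01), (r02 + r20), (r21 + r12), (1 - r00 - r11 + r22)] = ((r10 - r01)^2 + (r02 + r20)^2 + (r21 + r12)^2 + (1 - r00 - r11 + r22)^2) • !![r00, r01, r02; r10, r11, r12; r20, r21, r22] := by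
  ext i j
  fin_cases i <;> fin_cases j <;>
    simp [qm4, qn4, Matrix.smul_apply, smul_eq_mul,
      show ((⟨0, by omega⟩ : Fin 3)) = 0 from rfl, show ((⟨1, by omega⟩ : Fin 3)) = 1 from rfl,
      show ((⟨2, by omega⟩ : Fin 3)) = 2 from rfl]
  · linear_combination ((-1)*r00 - (2)*r11 + 2*r22 + 3) * hA00 + (2*r01 - (1)*r10) * hA01 + ((-2)*r02 - (1)*r20) * hA02 + (1) * hA11 + (1) * hA22 + ((-2)*r22 - (2)) * hB11 + ((-2)*r12 + 2*r21) * hB12 + (2*r11 - (2)) * hB22 + ((-2)*r00 - (2)*r11 + 2*r22) * hC00 + (r22 + 2) * hC11 + ((-1)*r21) * hC12 + ((-1)*r12) * hC21 + (r11 - (2)) * hC22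
  · linear_combination ((-1)*r01) * hA00 + (2) * hA01 + ((-1)*r01) * hA11 + ((-1)*r01) * hA22 + ((-2)*r11 + 2*r22 + 2) * hB01 + (2*r10) * hB11 + ((-2)*r20) * hB12 + ((-2)*r01) * hC00 + ((-2)*r11 - (2)) * hC01 + (2*r21) * hC02
  · linear_combination ((-1)*r02) * hA00 + ((-2)) * hA02 + ((-1)*r02) * hA11 + ((-1)*r02) * hA22 + ((-2)*r11 + 2*r22 + 2) * hB02 + (2*r10) * hB12 + ((-2)*r20) * hB22 + ((-2)*r02) * hC00 + ((-2)*r12) * hC01 + (2*r22 - (2)) * hC02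
  · linear_combination ((-1)*r10) * hA00 + ((-2)*r11 + 2*r22 + 2) * hA01 + (2*r01 - (1)*r10) * hA11 + ((-2)*r02 - (1)*r20) * hA12 + (2) * hB01 + ((-2)*r10) * hC00 + ((-1)*r22) * hC01 + (r21) * hC02 + ((-2)*r11 - (1)) * hC10 + (2*r12) * hC20
  · linear_combination ((-1)*r11 - (1)) * hA00 + ((-1)*r11 - (1)) * hA11 + ((-1)*r11 - (1)) * hA22 + (2) * hB11 + (2) * hB22 + ((-2)*r11 + 2) * hC00 + ((-2)*r02) * hC02 + (2*r10) * hC10 + ((-2)) * hC11 + (2*r11 - (2)*r22 - (2)) * hC22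
  · linear_combination ((-1)*r12) * hA00 + ((-1)*r12) * hA11 + ((-2)) * hA12 + ((-1)*r12) * hA22 + ((-2)*r12) * hC00 + (2*r02) * hC01 + ((-2)) * hC12 + (2*r22 + 2) * hC21 + (2*r12) * hC22
  · linear_combination ((-1)*r20) * hA00 + ((-2)*r11 + 2*r22 + 2) * hA02 + ((-1)*r20) * hA11 + (2*r01) * hA12 + ((-2)*r02 - (1)*r20) * hA22 + ((-2)) * hB02 + ((-2)*r20) * hC00 + ((-2)*r21) * hC10 + (2*r22 - (2)) * hC20
  · linear_combination ((-1)*r21) * hA00 + ((-1)*r21) * hA11 + ((-1)*r21) * hA22 + ((-2)) * hB12 + ((-2)*r21) * hC00 + (2*r20) * hC10 + (2*r22 + 2) * hC12 + ((-2)) * hC21 + (2*r21) * hC22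
  · linear_combination ((-1)*r22 + 1) * hA00 + ((-1)*r22 + 1) * hA11 + ((-1)*r22 - (1)) * hA22 + ((-2)) * hB22 + ((-2)*r22 - (2)) * hC00 + ((-2)*r22 - (2)) * hC11 + (2*r22 - (2)) * hC22
lemma so3OfP_surjective : Function.Surjective so3OfP := by
  rintro ⟨A, hASO⟩
  obtain ⟨hO, hdet⟩ := Matrix.mem_specialOrthogonalGroup_iff.mp hASO
  have hU1 : star A * A = 1 := hO.1
  have hU2 : A * star A = 1 := hO.2
  rw [Matrix.star_eq_conjTranspose, Matrix.conjTranspose_eq_transpose_of_trivial] at hU1 hU2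
  have hAdj : A.adjugate = Aᵀ := by
    have hinv : A⁻¹ = Aᵀ := Matrix.inv_eq_right_inv hU2
    rw [Matrix.inv_def, hdet] at hinv
    simpa using hinv
  rw [Matrix.adjugate_fin_three] at hAdj
  have hdet3 : A 0 0 * (A 1 1 * A 2 2 - A 1 2 * A 2 1) - A 0 1 * (A 1 0 * A 2 2 - A 1 2 * A 2 0) + A 0 2 * (A 1 0 * A 2 1 - A 1 1 * A 2 0) = 1 := by
    rw [Matrix.det_fin_three] at hdet
    linear_combination hdet
  have myA00 : A 0 0 * A 0 0 + A 0 1 * A 0 1 + A 0 2 * A 0 2 = 1 := by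
    have e := congrFun (congrFun hU2 0) 0
    simp [Matrix.mul_apply, Fin.sum_univ_three, Matrix.transpose_apply, Matrix.one_apply] at e
    linear_combination e
  have myB00 : A 0 0 * A 0 0 + A 1 0 * A 1 0 + A 2 0 * A 2 0 = 1 := by
    have e := congrFun (congrFun hU1 0) 0
    simp [Matrix.mul_apply, Fin.sum_univ_three, Matrix.transpose_apply, Matrix.one_apply] at e
    linear_combination e
  have myA01 : A 0 0 * A 1 0 + A 0 1 * A 1 1 + A 0 2 * A 1 2 = 0 := by
    have e := congrFun (congrFun hU2 0) 1
    simp [Matrix.mul_apply, Fin.sum_univ_three, Matrix.transpose_apply, Matrix.one_apply] at e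
    linear_combination e
  have myB01 : A 0 0 * A 0 1 + A 1 0 * A 1 1 + A 2 0 * A 2 1 = 0 := by
    have e := congrFun (congrFun hU1 0) 1
    simp [Matrix.mul_apply, Fin.sum_univ_three, Matrix.transpose_apply, Matrix.one_apply] at e
    linear_combination e
  have myA02 : A 0 0 * A 2 0 + A 0 1 * A 2 1 + A 0 2 * A 2 2 = 0 := by
    have e := congrFun (congrFun hU2 0) 2
    simp [Matrix.mul_apply, Fin.sum_univ_three, Matrix.transpose_apply, Matrix.one_apply] at e
    linear_combination e
  have myB02 : A 0 0 * A 0 2 + A 1 0 * A 1 2 + A 2 0 * A 2 2 = 0 := by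
    have e := congrFun (congrFun hU1 0) 2
    simp [Matrix.mul_apply, Fin.sum_univ_three, Matrix.transpose_apply, Matrix.one_apply] at e
    linear_combination e
  have myA11 : A 1 0 * A 1 0 + A 1 1 * A 1 1 + A 1 2 * A 1 2 = 1 := by
    have e := congrFun (congrFun hU2 1) 1
    simp [Matrix.mul_apply, Fin.sum_univ_three, Matrix.transpose_apply, Matrix.one_apply] at e
    linear_combination e
  have myB11 : A 0 1 * A 0 1 + A 1 1 * A 1 1 + A 2 1 * A 2 1 = 1 := by
    have e := congrFun (congrFun hU1 1) 1
    simp [Matrix.mul_apply, Fin.sum_univ_three, Matrix.transpose_apply, Matrix.one_apply] at e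
    linear_combination e
  have myA12 : A 1 0 * A 2 0 + A 1 1 * A 2 1 + A 1 2 * A 2 2 = 0 := by
    have e := congrFun (congrFun hU2 1) 2
    simp [Matrix.mul_apply, Fin.sum_univ_three, Matrix.transpose_apply, Matrix.one_apply] at e
    linear_combination e
  have myB12 : A 0 1 * A 0 2 + A 1 1 * A 1 2 + A 2 1 * A 2 2 = 0 := by
    have e := congrFun (congrFun hU1 1) 2
    simp [Matrix.mul_apply, Fin.sum_univ_three, Matrix.transpose_apply, Matrix.one_apply] at e
    linear_combination e
  have myA22 : A 2 0 * A 2 0 + A 2 1 * A 2 1 + A 2 2 * A 2 2 = 1 := by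
    have e := congrFun (congrFun hU2 2) 2
    simp [Matrix.mul_apply, Fin.sum_univ_three, Matrix.transpose_apply, Matrix.one_apply] at e
    linear_combination e
  have myB22 : A 0 2 * A 0 2 + A 1 2 * A 1 2 + A 2 2 * A 2 2 = 1 := by
    have e := congrFun (congrFun hU1 2) 2
    simp [Matrix.mul_apply, Fin.sum_univ_three, Matrix.transpose_apply, Matrix.one_apply] at e
    linear_combination e
  have myC00 : A 0 0 = A 1 1 * A 2 2 - A 1 2 * A 2 1 := by
    have e := congrFun (congrFun hAdj 0) 0
    simp [Matrix.transpose_apply] at e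
    linear_combination -e
  have myC01 : A 0 1 = -(A 1 0 * A 2 2 - A 1 2 * A 2 0) := by
    have e := congrFun (congrFun hAdj 1) 0
    simp [Matrix.transpose_apply] at e
    linear_combination -e
  have myC02 : A 0 2 = A 1 0 * A 2 1 - A 1 1 * A 2 0 := by
    have e := congrFun (congrFun hAdj 2) 0
    simp [Matrix.transpose_apply] at e
    linear_combination -e
  have myC10 : A 1 0 = -(A 0 1 * A 2 2 - A 0 2 * A 2 1) := by
    have e := congrFun (congrFun hAdj 0) 1
    simp [Matrix.transpose_apply] at e
    linear_combination -e
  have myC11 : A 1 1 = A 0 0 * A 2 2 - A 0 2 * A 2 0 := by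
    have e := congrFun (congrFun hAdj 1) 1
    simp [Matrix.transpose_apply] at e
    linear_combination -e
  have myC12 : A 1 2 = -(A 0 0 * A 2 1 - A 0 1 * A 2 0) := by
    have e := congrFun (congrFun hAdj 2) 1
    simp [Matrix.transpose_apply] at e
    linear_combination -e
  have myC20 : A 2 0 = A 0 1 * A 1 2 - A 0 2 * A 1 1 := by
    have e := congrFun (congrFun hAdj 0) 2
    simp [Matrix.transpose_apply] at e
    linear_combination -e
  have myC21 : A 2 1 = -(A 0 0 * A 1 2 - A 0 2 * A 1 0) := by
    have e := congrFun (congrFun hAdj 1) 2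
    simp [Matrix.transpose_apply] at e
    linear_combination -e
  have myC22 : A 2 2 = A 0 0 * A 1 1 - A 0 1 * A 1 0 := by
    have e := congrFun (congrFun hAdj 2) 2
    simp [Matrix.transpose_apply] at e
    linear_combination -e
  have hcase : 1 ≤ 1 + A 0 0 + A 1 1 + A 2 2 ∨ 1 ≤ 1 + A 0 0 - A 1 1 - A 2 2 ∨
      1 ≤ 1 - A 0 0 + A 1 1 - A 2 2 ∨ 1 ≤ 1 - A 0 0 - A 1 1 + A 2 2 := by
    by_contra hc
    push_neg at hc
    obtain ⟨h1, h2, h3, h4⟩ := hc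
    linarith
  have heta : !![A 0 0, A 0 1, A 0 2; A 1 0, A 1 1, A 1 2; A 2 0, A 2 1, A 2 2] = A :=
    (Matrix.eta_fin_three A).symm
  rcases hcase with ht | ht | ht | ht
  · -- case 0
    have hq : (![(1 + A 0 0 + A 1 1 + A 2 2), (A 2 1 - A 1 2), (A 0 2 - A 2 0), (A 1 0 - A 0 1)] : Fin 4 → ℝ) ≠ 0 := by
      intro h0
      have := congrFun h0 0
      simp at this
      linarith
    refine ⟨Projectivization.mk ℝ ![(1 + A 0 0 + A 1 1 + A 2 2), (A 2 1 - A 1 2), (A 0 2 - A 2 0), (A 1 0 - A 0 1)] hq, ?_⟩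
    rw [so3OfP, Projectivization.lift_mk]
    apply Subtype.ext
    show rot4 ![(1 + A 0 0 + A 1 1 + A 2 2), (A 2 1 - A 1 2), (A 0 2 - A 2 0), (A 1 0 - A 0 1)] = A
    have hkey := soKey0 (A 0 0) (A 0 1) (A 0 2) (A 1 0) (A 1 1) (A 1 2) (A 2 0) (A 2 1) (A 2 2) myA00 myB00 myA01 myB01 myA02 myB02 myA11 myB11 myA12 myB12 myA22 myB22 myC00 myC01 myC02 myC10 myC11 myC12 myC20 myC21 myC22 hdet3
    have hqn : qn4 ![(1 + A 0 0 + A 1 1 + A 2 2), (A 2 1 - A 1 2), (A 0 2 - A 2 0), (A 1 0 - A 0 1)] = (1 + A 0 0 + A 1 1 + A 2 2)^2 + (A 2 1 - A 1 2)^2 + (A 0 2 - A 2 0)^2 + (A 1 0 - A 0 1)^2 := by simp [qn4]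
    rw [rot4, hkey, heta, ← hqn, inv_smul_smul₀ (qn4_pos hq).ne']
  · -- case 1
    have hq : (![(A 2 1 - A 1 2), (1 + A 0 0 - A 1 1 - A 2 2), (A 1 0 + A 0 1), (A 0 2 + A 2 0)] : Fin 4 → ℝ) ≠ 0 := by
      intro h0
      have := congrFun h0 1
      simp at this
      linarith
    refine ⟨Projectivization.mk ℝ ![(A 2 1 - A 1 2), (1 + A 0 0 - A 1 1 - A 2 2), (A 1 0 + A 0 1), (A 0 2 + A 2 0)] hq, ?_⟩
    rw [so3OfP, Projectivization.lift_mk]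
    apply Subtype.ext
    show rot4 ![(A 2 1 - A 1 2), (1 + A 0 0 - A 1 1 - A 2 2), (A 1 0 + A 0 1), (A 0 2 + A 2 0)] = A
    have hkey := soKey1 (A 0 0) (A 0 1) (A 0 2) (A 1 0) (A 1 1) (A 1 2) (A 2 0) (A 2 1) (A 2 2) myA00 myB00 myA01 myB01 myA02 myB02 myA11 myB11 myA12 myB12 myA22 myB22 myC00 myC01 myC02 myC10 myC11 myC12 myC20 myC21 myC22 hdet3
    have hqn : qn4 ![(A 2 1 - A 1 2), (1 + A 0 0 - A 1 1 - A 2 2), (A 1 0 + A 0 1), (A 0 2 + A 2 0)] = (A 2 1 - A 1 2)^2 + (1 + A 0 0 - A 1 1 - A 2 2)^2 + (A 1 0 + A 0 1)^2 + (A 0 2 + A 2 0)^2 := by simp [qn4]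
    rw [rot4, hkey, heta, ← hqn, inv_smul_smul₀ (qn4_pos hq).ne']
  · -- case 2
    have hq : (![(A 0 2 - A 2 0), (A 1 0 + A 0 1), (1 - A 0 0 + A 1 1 - A 2 2), (A 2 1 + A 1 2)] : Fin 4 → ℝ) ≠ 0 := by
      intro h0
      have := congrFun h0 2
      simp at this
      linarith
    refine ⟨Projectivization.mk ℝ ![(A 0 2 - A 2 0), (A 1 0 + A 0 1), (1 - A 0 0 + A 1 1 - A 2 2), (A 2 1 + A 1 2)] hq, ?_⟩
    rw [so3OfP, Projectivization.lift_mk]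
    apply Subtype.ext
    show rot4 ![(A 0 2 - A 2 0), (A 1 0 + A 0 1), (1 - A 0 0 + A 1 1 - A 2 2), (A 2 1 + A 1 2)] = A
    have hkey := soKey2 (A 0 0) (A 0 1) (A 0 2) (A 1 0) (A 1 1) (A 1 2) (A 2 0) (A 2 1) (A 2 2) myA00 myB00 myA01 myB01 myA02 myB02 myA11 myB11 myA12 myB12 myA22 myB22 myC00 myC01 myC02 myC10 myC11 myC12 myC20 myC21 myC22 hdet3
    have hqn : qn4 ![(A 0 2 - A 2 0), (A 1 0 + A 0 1), (1 - A 0 0 + A 1 1 - A 2 2), (A 2 1 + A 1 2)] = (A 0 2 - A 2 0)^2 + (A 1 0 + A 0 1)^2 + (1 - A 0 0 + A 1 1 - A 2 2)^2 + (A 2 1 + A 1 2)^2 := by simp [qn4]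
    rw [rot4, hkey, heta, ← hqn, inv_smul_smul₀ (qn4_pos hq).ne']
  · -- case 3
    have hq : (![(A 1 0 - A 0 1), (A 0 2 + A 2 0), (A 2 1 + A 1 2), (1 - A 0 0 - A 1 1 + A 2 2)] : Fin 4 → ℝ) ≠ 0 := by
      intro h0
      have := congrFun h0 3
      simp at this
      linarith
    refine ⟨Projectivization.mk ℝ ![(A 1 0 - A 0 1), (A 0 2 + A 2 0), (A 2 1 + A 1 2), (1 - A 0 0 - A 1 1 + A 2 2)] hq, ?_⟩
    rw [so3OfP, Projectivization.lift_mk]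
    apply Subtype.ext
    show rot4 ![(A 1 0 - A 0 1), (A 0 2 + A 2 0), (A 2 1 + A 1 2), (1 - A 0 0 - A 1 1 + A 2 2)] = A
    have hkey := soKey3 (A 0 0) (A 0 1) (A 0 2) (A 1 0) (A 1 1) (A 1 2) (A 2 0) (A 2 1) (A 2 2) myA00 myB00 myA01 myB01 myA02 myB02 myA11 myB11 myA12 myB12 myA22 myB22 myC00 myC01 myC02 myC10 myC11 myC12 myC20 myC21 myC22 hdet3
    have hqn : qn4 ![(A 1 0 - A 0 1), (A 0 2 + A 2 0), (A 2 1 + A 1 2), (1 - A 0 0 - A 1 1 + A 2 2)] = (A 1 0 - A 0 1)^2 + (A 0 2 + A 2 0)^2 + (A 2 1 + A 1 2)^2 + (1 - A 0 0 - A 1 1 + A 2 2)^2 := by simp [qn4]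
    rw [rot4, hkey, heta, ← hqn, inv_smul_smul₀ (qn4_pos hq).ne']

def sphereToP (x : Metric.sphere (0 : Fin 4 → ℝ) 1) : Projectivization ℝ (Fin 4 → ℝ) :=
  Projectivization.mk ℝ x.1 (by
    intro h0
    have hx := mem_sphere_zero_iff_norm.mp x.2
    rw [h0] at hx
    simp at hx)

lemma continuous_sphereToP : Continuous sphereToP := by
  exact continuous_quotient_mk'.comp (continuous_subtype_val.subtype_mk _)

lemma surjective_sphereToP : Function.Surjective sphereToP := by
  intro p
  induction p using Projectivization.ind with | h v hv => ?_
  have hn : ‖v‖ ≠ 0 := norm_ne_zero_iff.mpr hv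
  refine ⟨⟨‖v‖⁻¹ • v, ?_⟩, ?_⟩
  · rw [mem_sphere_zero_iff_norm, norm_smul]
    simp [abs_of_nonneg (norm_nonneg v), inv_mul_cancel₀ hn]
  · show Projectivization.mk ℝ (‖v‖⁻¹ • v) _ = Projectivization.mk ℝ v hv
    rw [Projectivization.mk_eq_mk_iff']
    exact ⟨‖v‖⁻¹, rfl⟩

instance : CompactSpace (Projectivization ℝ (Fin 4 → ℝ)) := by
  constructor
  rw [← Set.range_eq_univ.mpr surjective_sphereToP]
  exact isCompact_range continuous_sphereToP


/-- SO(3) is homeomorphic to real projective 3-space, the projectivization of `ℝ⁴`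
(the quotient of `ℝ⁴ \ {0}` by nonzero scalar multiplication, with the quotient
topology; equivalently the quotient of `S³` by the antipodal identification). -/
theorem SO3_homeomorph_RP3 :
    Nonempty ((Matrix.specialOrthogonalGroup (Fin 3) ℝ) ≃ₜ
      Projectivization ℝ (Fin 4 → ℝ)) := by
  have hbij : Function.Bijective so3OfP := ⟨so3OfP_injective, so3OfP_surjective⟩
  exact ⟨(Continuous.homeoOfEquivCompactToT2
    (f := Equiv.ofBijective so3OfP hbij) continuous_so3OfP).symm⟩

end SO3RP3Aux
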